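/- On the unit sphere in three-dimensional Euclidean space, the sum of the interior angles of any nondegenerate spherical triangle (with vertices pairwise non-antipodal, joined by minimizing great-circle arcs) is strictly greater than π. -/

import Mathlib

open Real RealInnerProductSpace

/-- The interior angle of a spherical triangle at the vertex `A`, towards vertices `X` and `Y`:
the angle between the tangent vectors at `A` of the great-circle arcs `AX` and `AY`. -/
noncomputable def sAngle (A X Y : EuclideanSpace ℝ (Fin 3)) : ℝ :=
  InnerProductGeometry.angle (X - ⟪A, X⟫ • A) (Y - ⟪A, Y⟫ • A)

def cp (x y : EuclideanSpace ℝ (Fin 3)) : EuclideanSpace ℝ (Fin 3) :=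
  WithLp.toLp 2 ![x 1 * y 2 - x 2 * y 1, x 2 * y 0 - x 0 * y 2, x 0 * y 1 - x 1 * y 0]

lemma inner3 (x y : EuclideanSpace ℝ (Fin 3)) :
    ⟪x, y⟫ = x 0 * y 0 + x 1 * y 1 + x 2 * y 2 := by
  simp [PiLp.inner_apply, Fin.sum_univ_three, mul_comm]

lemma cp0 (x y : EuclideanSpace ℝ (Fin 3)) : cp x y 0 = x 1 * y 2 - x 2 * y 1 := rfl
lemma cp1 (x y : EuclideanSpace ℝ (Fin 3)) : cp x y 1 = x 2 * y 0 - x 0 * y 2 := rfl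
lemma cp2 (x y : EuclideanSpace ℝ (Fin 3)) : cp x y 2 = x 0 * y 1 - x 1 * y 0 := rfl

lemma binet (u v x y : EuclideanSpace ℝ (Fin 3)) :
    ⟪cp u v, cp x y⟫ = ⟪u, x⟫ * ⟪v, y⟫ - ⟪u, y⟫ * ⟪v, x⟫ := by
  simp only [inner3, cp0, cp1, cp2]; ring

open InnerProductGeometry in
lemma angle_congr {x y u v : EuclideanSpace ℝ (Fin 3)}
    (hxx : ⟪x, x⟫ = ⟪u, u⟫) (hyy : ⟪y, y⟫ = ⟪v, v⟫) (hxy : ⟪x, y⟫ = ⟪u, v⟫) :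
    angle x y = angle u v := by
  unfold InnerProductGeometry.angle
  rw [norm_eq_sqrt_real_inner x, norm_eq_sqrt_real_inner y, norm_eq_sqrt_real_inner u,
    norm_eq_sqrt_real_inner v, hxx, hyy, hxy]

open InnerProductGeometry in
lemma sAngle_eq (A X Y : EuclideanSpace ℝ (Fin 3)) (hA : ‖A‖ = 1) :
    InnerProductGeometry.angle (X - ⟪A, X⟫ • A) (Y - ⟪A, Y⟫ • A) = angle (cp A X) (cp A Y) := by
  have hAA : ⟪A, A⟫ = 1 := by
    rw [real_inner_self_eq_norm_mul_norm, hA]; norm_num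
  have key : ∀ P Q : EuclideanSpace ℝ (Fin 3),
      ⟪P - ⟪A, P⟫ • A, Q - ⟪A, Q⟫ • A⟫ = ⟪cp A P, cp A Q⟫ := by
    intro P Q
    rw [binet, hAA]
    rw [inner_sub_left, inner_sub_right, inner_sub_right, real_inner_smul_left,
      real_inner_smul_left, real_inner_smul_right, real_inner_smul_right, hAA,
      real_inner_comm P A]
    ring
  exact angle_congr (key X X) (key Y Y) (key X Y)


open InnerProductGeometry in
lemma angle_triangle_strict {F : Type*} [NormedAddCommGroup F] [InnerProductSpace ℝ F]
    (x z y : F) (hz : z ≠ 0)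
    (hxz : ∀ t : ℝ, x ≠ t • z) (hyz : ∀ t : ℝ, y ≠ t • z)
    (hy : ∀ s t : ℝ, y ≠ s • x + t • z) :
    angle x y < angle x z + angle z y := by
  have hx0 : x ≠ 0 := fun h => hxz 0 (by simp [h])
  have hy0 : y ≠ 0 := fun h => hyz 0 (by simp [h])
  have hγπ : angle x y < π := by
    rcases lt_or_eq_of_le (angle_le_pi x y) with h | h
    · exact h
    exfalso
    rcases angle_eq_pi_iff.1 h with ⟨_, r, _, hr⟩
    exact hy r 0 (by simp [hr])
  rcases le_or_gt π (angle x z + angle z y) with hcase | hcase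
  · exact lt_of_lt_of_le hγπ hcase
  have hn : (0:ℝ) < ‖z‖ := norm_pos_iff.2 hz
  have hn' : ‖z‖ ≠ 0 := ne_of_gt hn
  have hzz : ⟪z, z⟫ = ‖z‖^2 := real_inner_self_eq_norm_sq z
  obtain ⟨p, hp⟩ : ∃ p : ℝ, ⟪x, z⟫ = p * ‖z‖^2 :=
    ⟨⟪x, z⟫ / ‖z‖^2, by field_simp⟩
  obtain ⟨q, hq⟩ : ∃ q : ℝ, ⟪y, z⟫ = q * ‖z‖^2 :=
    ⟨⟪y, z⟫ / ‖z‖^2, by field_simp⟩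
  have hp' : ⟪z, x⟫ = p * ‖z‖^2 := by rw [real_inner_comm]; exact hp
  have hq' : ⟪z, y⟫ = q * ‖z‖^2 := by rw [real_inner_comm]; exact hq
  have hx'0 : x - p • z ≠ 0 := fun h => hxz p (sub_eq_zero.1 h)
  have hy'0 : y - q • z ≠ 0 := fun h => hyz q (sub_eq_zero.1 h)
  have hx'n : (0:ℝ) < ‖x - p • z‖ := norm_pos_iff.2 hx'0
  have hy'n : (0:ℝ) < ‖y - q • z‖ := norm_pos_iff.2 hy'0
  -- strict Cauchy-Schwarz lower bound
  have hCS : -(‖x - p • z‖ * ‖y - q • z‖) < ⟪x - p • z, y - q • z⟫ := by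
    have h1 : ⟪x - p • z, -(y - q • z)⟫ < ‖x - p • z‖ * ‖-(y - q • z)‖ := by
      rw [inner_lt_norm_mul_iff_real]
      intro heq
      rw [norm_neg] at heq
      have h2 : ‖x - p • z‖ • (y - q • z)
          = ‖x - p • z‖ • ((-(‖y - q • z‖ / ‖x - p • z‖)) • (x - p • z)) := by
        rw [smul_smul]
        have he : ‖x - p • z‖ * -(‖y - q • z‖ / ‖x - p • z‖) = -‖y - q • z‖ := by
          field_simp
        rw [he, neg_smul, heq, smul_neg, neg_neg]
      have h3 : y - q • z = (-(‖y - q • z‖ / ‖x - p • z‖)) • (x - p • z) :=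
        smul_right_injective F (ne_of_gt hx'n) h2
      apply hy (-(‖y - q • z‖ / ‖x - p • z‖)) ((‖y - q • z‖ / ‖x - p • z‖) * p + q)
      linear_combination (norm := module) h3
    rw [norm_neg, inner_neg_right] at h1
    linarith
  -- inner product values
  have hxx : ⟪x, x⟫ = ‖x - p • z‖^2 + p^2 * ‖z‖^2 := by
    have h : ⟪x - p • z, x - p • z⟫ = ‖x - p • z‖^2 := real_inner_self_eq_norm_sq _
    simp only [inner_sub_left, inner_sub_right, real_inner_smul_left, real_inner_smul_right,
      hp', hp, hzz] at h
    linear_combination h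
  have hyy : ⟪y, y⟫ = ‖y - q • z‖^2 + q^2 * ‖z‖^2 := by
    have h : ⟪y - q • z, y - q • z⟫ = ‖y - q • z‖^2 := real_inner_self_eq_norm_sq _
    simp only [inner_sub_left, inner_sub_right, real_inner_smul_left, real_inner_smul_right,
      hq', hq, hzz] at h
    linear_combination h
  have hxy : ⟪x, y⟫ = ⟪x - p • z, y - q • z⟫ + p * q * ‖z‖^2 := by
    simp only [inner_sub_left, inner_sub_right, real_inner_smul_left, real_inner_smul_right,
      hp', hq', hp, hq, hzz]
    ring
  -- cos and sin values
  have hcosα : Real.cos (angle x z) * ‖x‖ = p * ‖z‖ := by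
    have h1 := cos_angle_mul_norm_mul_norm x z
    rw [hp] at h1
    exact mul_right_cancel₀ hn' (by linear_combination h1)
  have hcosβ : Real.cos (angle z y) * ‖y‖ = q * ‖z‖ := by
    have h1 := cos_angle_mul_norm_mul_norm z y
    rw [hq'] at h1
    exact mul_right_cancel₀ hn' (by linear_combination h1)
  have hsinα : Real.sin (angle x z) * ‖x‖ = ‖x - p • z‖ := by
    have h1 := sin_angle_mul_norm_mul_norm x z
    rw [hp, hxx, hzz] at h1
    have he : (‖x - p • z‖^2 + p^2 * ‖z‖^2) * ‖z‖^2 - p * ‖z‖^2 * (p * ‖z‖^2)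
        = (‖z‖ * ‖x - p • z‖)^2 := by ring
    rw [he, Real.sqrt_sq (by positivity)] at h1
    exact mul_right_cancel₀ hn' (by linear_combination h1)
  have hsinβ : Real.sin (angle z y) * ‖y‖ = ‖y - q • z‖ := by
    have h1 := sin_angle_mul_norm_mul_norm z y
    rw [hq', hyy, hzz] at h1
    have he : ‖z‖^2 * (‖y - q • z‖^2 + q^2 * ‖z‖^2) - q * ‖z‖^2 * (q * ‖z‖^2)
        = (‖z‖ * ‖y - q • z‖)^2 := by ring
    rw [he, Real.sqrt_sq (by positivity)] at h1
    exact mul_right_cancel₀ hn' (by linear_combination h1)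
  -- compare cosines
  have hkey : Real.cos (angle x z + angle z y) * (‖x‖ * ‖y‖)
      < Real.cos (angle x y) * (‖x‖ * ‖y‖) := by
    rw [cos_angle_mul_norm_mul_norm, Real.cos_add]
    have he : (Real.cos (angle x z) * Real.cos (angle z y)
        - Real.sin (angle x z) * Real.sin (angle z y)) * (‖x‖ * ‖y‖)
        = (Real.cos (angle x z) * ‖x‖) * (Real.cos (angle z y) * ‖y‖)
          - (Real.sin (angle x z) * ‖x‖) * (Real.sin (angle z y) * ‖y‖) := by ring
    rw [he, hcosα, hsinα, hcosβ, hsinβ, hxy]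
    have : p * ‖z‖ * (q * ‖z‖) = p * q * ‖z‖^2 := by ring
    rw [this]
    linarith
  have hcos : Real.cos (angle x z + angle z y) < Real.cos (angle x y) := by
    have hpos : (0:ℝ) < ‖x‖ * ‖y‖ :=
      mul_pos (norm_pos_iff.2 hx0) (norm_pos_iff.2 hy0)
    exact (mul_lt_mul_iff_of_pos_right hpos).1 hkey
  by_contra hcon
  push_neg at hcon
  rcases eq_or_lt_of_le hcon with h | h
  · rw [h] at hcos; exact lt_irrefl _ hcos
  · have hmem1 : angle x z + angle z y ∈ Set.Icc 0 π :=
      ⟨add_nonneg (angle_nonneg x z) (angle_nonneg z y), le_of_lt hcase⟩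
    have hmem2 : angle x y ∈ Set.Icc 0 π := ⟨angle_nonneg x y, angle_le_pi x y⟩
    have := Real.strictAntiOn_cos hmem1 hmem2 h
    linarith


open InnerProductGeometry in
lemma cp_anticomm (x y : EuclideanSpace ℝ (Fin 3)) : cp x y = - cp y x := by
  ext i
  fin_cases i <;> simp [cp] <;> ring

lemma inner_cp_left (x y : EuclideanSpace ℝ (Fin 3)) : ⟪x, cp x y⟫ = 0 := by
  simp only [inner3, cp0, cp1, cp2]; ring

lemma inner_cp_right (x y : EuclideanSpace ℝ (Fin 3)) : ⟪y, cp x y⟫ = 0 := by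
  simp only [inner3, cp0, cp1, cp2]; ring

lemma cyc1 (x y z : EuclideanSpace ℝ (Fin 3)) : ⟪x, cp y z⟫ = ⟪y, cp z x⟫ := by
  simp only [inner3, cp0, cp1, cp2]; ring

open InnerProductGeometry in
theorem spherical_angle_sum_gt_pi' (A B C : EuclideanSpace ℝ (Fin 3))
    (hA : ‖A‖ = 1) (hB : ‖B‖ = 1) (hC : ‖C‖ = 1)
    (hAB : A ≠ B) (hBC : B ≠ C) (hAC : A ≠ C)
    (hAB' : A ≠ -B) (hBC' : B ≠ -C) (hAC' : A ≠ -C)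
    (hind : LinearIndependent ℝ ![A, B, C]) :
    angle (B - ⟪A, B⟫ • A) (C - ⟪A, C⟫ • A) + angle (A - ⟪B, A⟫ • B) (C - ⟪B, C⟫ • B)
      + angle (A - ⟪C, A⟫ • C) (B - ⟪C, B⟫ • C) > π := by
  have hBB : ⟪B, B⟫ = 1 := by rw [real_inner_self_eq_norm_sq, hB]; norm_num
  have hCC : ⟪C, C⟫ = 1 := by rw [real_inner_self_eq_norm_sq, hC]; norm_num
  -- the triple product
  have hd : ⟪A, cp B C⟫ ≠ 0 := by
    intro hd0
    have ha0 : cp B C ≠ 0 := by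
      intro h0
      have hval : ⟪cp B C, cp B C⟫ = 1 - ⟪B, C⟫ * ⟪B, C⟫ := by
        rw [binet, hBB, hCC, real_inner_comm C B]; ring
      rw [h0, inner_zero_left] at hval
      have habs : ⟪B, C⟫ = 1 ∨ ⟪B, C⟫ = -1 := by
        rcases mul_self_eq_one_iff.1 (by linarith : ⟪B, C⟫ * ⟪B, C⟫ = 1) with h | h
        · exact Or.inl h
        · exact Or.inr h
      rcases habs with h | h
      · have : ‖C‖ • B = ‖B‖ • C := inner_eq_norm_mul_iff_real.1 (by rw [h, hB, hC]; norm_num)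
        rw [hB, hC, one_smul, one_smul] at this
        exact hBC this
      · have h' : ⟪B, -C⟫ = ‖B‖ * ‖-C‖ := by
          rw [inner_neg_right, h, hB, norm_neg, hC]; norm_num
        have : ‖-C‖ • B = ‖B‖ • -C := inner_eq_norm_mul_iff_real.1 h'
        rw [hB, norm_neg, hC, one_smul, one_smul] at this
        exact hBC' this
    -- cp B C is orthogonal to the whole space
    have hcard : Fintype.card (Fin 3) = Module.finrank ℝ (EuclideanSpace ℝ (Fin 3)) := by
      simp [finrank_euclideanSpace_fin]
    let bas := basisOfLinearIndependentOfCardEqFinrank hind hcard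
    have hbas : ⇑bas = ![A, B, C] := coe_basisOfLinearIndependentOfCardEqFinrank hind hcard
    have hmem : cp B C ∈ Submodule.span ℝ (Set.range ![A, B, C]) := by
      rw [← hbas, bas.span_eq]; trivial
    obtain ⟨g, hg⟩ := Submodule.mem_span_range_iff_exists_fun ℝ |>.1 hmem
    have : ⟪cp B C, cp B C⟫ = 0 := by
      have h5 : ⟪cp B C, cp B C⟫ = ⟪∑ i, g i • ![A, B, C] i, cp B C⟫ := by rw [hg]
      rw [h5, Fin.sum_univ_three]
      simp only [Matrix.cons_val_zero, Matrix.cons_val_one, Matrix.head_cons,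
        Matrix.cons_val_two, Matrix.tail_cons]
      rw [inner_add_left, inner_add_left, real_inner_smul_left, real_inner_smul_left,
        real_inner_smul_left, hd0, inner_cp_left, inner_cp_right]
      ring
    exact ha0 (inner_self_eq_zero.1 this)
  -- notation for the triple product through each vertex
  have hdB : ⟪B, cp C A⟫ = ⟪A, cp B C⟫ := (cyc1 A B C).symm
  have hdC : ⟪C, cp A B⟫ = ⟪B, cp C A⟫ := (cyc1 B C A).symm
  -- orthogonality facts
  have oBc : ⟪B, cp A B⟫ = 0 := inner_cp_right A B
  have oAc : ⟪A, cp A B⟫ = 0 := inner_cp_left A B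
  have oAb : ⟪A, cp C A⟫ = 0 := inner_cp_right C A
  have oBa : ⟪B, cp B C⟫ = 0 := inner_cp_left B C
  have oCa : ⟪C, cp B C⟫ = 0 := inner_cp_right B C
  have oCb : ⟪C, cp C A⟫ = 0 := inner_cp_left C A
  have hc0 : cp A B ≠ 0 := by
    intro h0
    apply hd
    rw [← hdB, ← hdC, h0, inner_zero_right]
  -- strict triangle inequality for the dual vectors
  have key : angle (cp C A) (cp B C)
      < angle (cp C A) (-(cp A B)) + angle (-(cp A B)) (cp B C) := by
    apply angle_triangle_strict
    · exact neg_ne_zero.2 hc0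
    · intro t h
      have := congrArg (fun v => ⟪B, v⟫) h
      simp only [real_inner_smul_right, inner_neg_right, oBc, hdB] at this
      rw [this] at hd
      exact hd (by ring)
    · intro t h
      have := congrArg (fun v => ⟪A, v⟫) h
      simp only [real_inner_smul_right, inner_neg_right, oAc] at this
      exact hd (by rw [this]; ring)
    · intro s t h
      have := congrArg (fun v => ⟪A, v⟫) h
      simp only [inner_add_right, real_inner_smul_right, inner_neg_right, oAc, oAb] at this
      exact hd (by rw [this]; ring)
  -- rewrite each spherical angle via cross products
  have e1 : angle (B - ⟪A, B⟫ • A) (C - ⟪A, C⟫ • A)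
      = π - angle (cp A B) (cp C A) := by
    rw [sAngle_eq A B C hA, cp_anticomm A C, angle_neg_right]
  have e2 : angle (A - ⟪B, A⟫ • B) (C - ⟪B, C⟫ • B)
      = π - angle (cp A B) (cp B C) := by
    rw [sAngle_eq B A C hB, cp_anticomm B A, angle_neg_left]
  have e3 : angle (A - ⟪C, A⟫ • C) (B - ⟪C, B⟫ • C)
      = π - angle (cp C A) (cp B C) := by
    rw [sAngle_eq C A B hC, cp_anticomm C B, angle_neg_right]
  rw [e1, e2, e3]
  have hc1 : angle (cp A B) (cp C A) = angle (cp C A) (cp A B) := angle_comm _ _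
  have hc2 : angle (cp C A) (-(cp A B)) = π - angle (cp C A) (cp A B) := angle_neg_right _ _
  have hc3 : angle (-(cp A B)) (cp B C) = π - angle (cp A B) (cp B C) := angle_neg_left _ _
  linarith [key, hc1, hc2, hc3]

/-- On the unit sphere, the sum of the interior angles of any nondegenerate spherical triangle
(vertices pairwise non-antipodal and not on a common great circle) is strictly greater than π. -/
theorem spherical_angle_sum_gt_pi (A B C : EuclideanSpace ℝ (Fin 3))
    (hA : ‖A‖ = 1) (hB : ‖B‖ = 1) (hC : ‖C‖ = 1)
    (hAB : A ≠ B) (hBC : B ≠ C) (hAC : A ≠ C)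
    (hAB' : A ≠ -B) (hBC' : B ≠ -C) (hAC' : A ≠ -C)
    (hind : LinearIndependent ℝ ![A, B, C]) :
    sAngle A B C + sAngle B A C + sAngle C A B > π := by
  have h := spherical_angle_sum_gt_pi' A B C hA hB hC hAB hBC hAC hAB' hBC' hAC' hind
  simpa [sAngle] using h
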